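/- Scalar-to-matrix Jacobian injectivity transfer: let G = (V,E) be a graph with boundary and s : E → (0,∞) a scalar conductivity, and define the matrix conductivity σ(e) = s(e)·I_d ∈ ℝ^{d×d}. If the Jacobian of the scalar conductivity-to-DtN map is injective at s (equivalently, the products ∇v_i ∘ ∇v_{i'} of gradients of fundamental Dirichlet solutions span ℝ^{|E|}), then the Jacobian of the matrix-valued conductivity-to-DtN map is injective at σ (equivalently, the vectorized blockwise outer products vect((∇u) ⊙ (∇u')) over all pairs of fundamental matrix Dirichlet solutions span ℝ^{d²|E|}). -/

import Mathlib

open Matrix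

/-- The scalar discrete gradient. -/
def sgrad {V E : Type*} (e1 e2 : E → V) (u : V → ℝ) : E → ℝ :=
  fun e => u (e1 e) - u (e2 e)

/-- The scalar weighted graph Laplacian applied to `u`. -/
noncomputable def slap {V E : Type*} [Fintype E] [DecidableEq V]
    (e1 e2 : E → V) (s : E → ℝ) (u : V → ℝ) : V → ℝ :=
  fun i => ∑ e, ((if e1 e = i then (1 : ℝ) else 0) - (if e2 e = i then 1 else 0)) *
    (s e * sgrad e1 e2 u e)

/-- **scalar-to-matrix Jacobian injectivity transfer.** Let `s` be a
positive scalar conductivity, `v j` the fundamental scalar Dirichlet solutions (with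
boundary data the canonical basis vectors indexed by boundary nodes `j`).  If the
Hadamard products of gradients of the `v j` span `ℝ^{|E|}` (injectivity of the scalar
Jacobian), then for the matrix conductivity `σ(e) = s(e)·I_d` the vectorized blockwise
outer products of gradients of the fundamental matrix solutions `v j ⊗ e_a` span
`ℝ^{d²|E|}` (injectivity of the matrix Jacobian). -/
theorem scalar_to_matrix_jacobian_transfer {V E : Type*} [Fintype V] [Fintype E]
    [DecidableEq V] {d : ℕ} (e1 e2 : E → V)
    (Bd : V → Prop) [DecidablePred Bd]
    (s : E → ℝ) (hs : ∀ e, 0 < s e)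
    (v : {x : V // Bd x} → V → ℝ)
    (hvb : ∀ j : {x : V // Bd x}, ∀ i, Bd i → v j i = if i = j.1 then 1 else 0)
    (hvi : ∀ j : {x : V // Bd x}, ∀ i, ¬ Bd i → slap e1 e2 s (v j) i = 0)
    (hspan : Submodule.span ℝ
        {w : E → ℝ | ∃ j j' : {x : V // Bd x},
          w = fun e => sgrad e1 e2 (v j) e * sgrad e1 e2 (v j') e} = ⊤) :
    Submodule.span ℝ
        {w : E → Matrix (Fin d) (Fin d) ℝ |
          ∃ (j j' : {x : V // Bd x}) (a a' : Fin d),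
            w = fun e => fun k l =>
              sgrad e1 e2 (v j) e * sgrad e1 e2 (v j') e *
                (if k = a ∧ l = a' then 1 else 0)} = ⊤ := by
  set T : Set (E → Matrix (Fin d) (Fin d) ℝ) :=
    {w : E → Matrix (Fin d) (Fin d) ℝ |
      ∃ (j j' : {x : V // Bd x}) (a a' : Fin d),
        w = fun e => fun k l =>
          sgrad e1 e2 (v j) e * sgrad e1 e2 (v j') e *
            (if k = a ∧ l = a' then 1 else 0)} with hT
  -- the linear embedding placing a scalar function at matrix entry (a, a')
  have key : ∀ (a a' : Fin d), ∀ c : E → ℝ,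
      (fun e => fun k l => c e * (if k = a ∧ l = a' then (1:ℝ) else 0)) ∈
        Submodule.span ℝ T := by
    intro a a' c
    let φ : (E → ℝ) →ₗ[ℝ] (E → Matrix (Fin d) (Fin d) ℝ) :=
      { toFun := fun c => fun e => Matrix.of fun k l => c e * (if k = a ∧ l = a' then (1:ℝ) else 0)
        map_add' := by
          intro x y; funext e; ext k l; by_cases h : k = a ∧ l = a' <;> simp [h, add_mul]
        map_smul' := by
          intro r x; funext e; ext k l
          simp [Matrix.smul_apply, mul_assoc] }
    have hc : c ∈ Submodule.span ℝ
        {w : E → ℝ | ∃ j j' : {x : V // Bd x},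
          w = fun e => sgrad e1 e2 (v j) e * sgrad e1 e2 (v j') e} := by
      rw [hspan]; trivial
    have : φ c ∈ Submodule.map φ (Submodule.span ℝ
        {w : E → ℝ | ∃ j j' : {x : V // Bd x},
          w = fun e => sgrad e1 e2 (v j) e * sgrad e1 e2 (v j') e}) :=
      Submodule.mem_map_of_mem hc
    rw [Submodule.map_span] at this
    refine Submodule.span_mono (R := ℝ) (M := E → Matrix (Fin d) (Fin d) ℝ) ?_ this
    rintro _ ⟨w, ⟨j, j', rfl⟩, rfl⟩
    exact ⟨j, j', a, a', rfl⟩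
  rw [eq_top_iff]
  rintro w -
  have hw : w = ∑ a : Fin d, ∑ a' : Fin d,
      (fun e => fun k l => w e a a' * (if k = a ∧ l = a' then (1:ℝ) else 0)) := by
    funext e; ext k l
    simp only [Finset.sum_apply, Matrix.sum_apply]
    rw [Finset.sum_eq_single k]
    · rw [Finset.sum_eq_single l]
      · simp
      · intro b _ hb; simp [hb, (Ne.symm hb : l ≠ b)]
      · simp
    · intro b _ hb
      have : ∀ x : Fin d, ¬ (k = b ∧ l = x) := fun x h => hb h.1.symm
      simp [this]
    · simp
  rw [hw]
  exact Submodule.sum_mem _ fun a _ => Submodule.sum_mem _ fun a' _ =>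
    key a a' (fun e => w e a a')
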